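/- Erdős–Gallai path theorem: Let G be a graph on n vertices and let k ≥ 2 be an integer. If the number of edges of G satisfies e(G) > ((k − 1)/2)·n, then G contains a path with k edges, i.e., a copy of the path P_{k+1} on k + 1 vertices. -/

import Mathlib

open SimpleGraph

/-- The edge coloring `c` of the complete graph on `V` contains a rainbow triangle. -/
def HasRainbowTriangle {V α : Type*} (c : Sym2 V → α) : Prop :=
  ∃ x y z : V, x ≠ y ∧ x ≠ z ∧ y ≠ z ∧
    c s(x, y) ≠ c s(x, z) ∧ c s(x, y) ≠ c s(y, z) ∧ c s(x, z) ≠ c s(y, z)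

/-- The edge coloring `c` contains a copy of `H` all of whose edges have color `i`. -/
def HasMonoCopyIn {V W α : Type*} (c : Sym2 V → α) (H : SimpleGraph W) (i : α) : Prop :=
  ∃ f : W ↪ V, ∀ u v, H.Adj u v → c s(f u, f v) = i

/-- The edge coloring `c` contains a monochromatic copy of `H`. -/
def HasMonoCopy {V W α : Type*} (c : Sym2 V → α) (H : SimpleGraph W) : Prop :=
  ∃ i, HasMonoCopyIn c H i

/-- Every `k`-coloring of the edges of `K_n` contains a rainbow triangle or a
monochromatic copy of `H`. -/
def grProp {W : Type*} (k : ℕ) (H : SimpleGraph W) (n : ℕ) : Prop :=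
  ∀ c : Sym2 (Fin n) → Fin k, HasRainbowTriangle c ∨ HasMonoCopy c H

/-- The `k`-color Gallai–Ramsey number `gr_k(K₃ : H)`: the minimum `N` such that for all
`n ≥ N`, every `k`-coloring of the edges of `K_n` contains a rainbow triangle or a
monochromatic copy of `H`. -/
noncomputable def gr {W : Type*} (k : ℕ) (H : SimpleGraph W) : ℕ :=
  sInf {N | ∀ n, N ≤ n → grProp k H n}

set_option linter.unusedSectionVars false
set_option maxHeartbeats 1000000

namespace EGP

open Finset

variable {V : Type*} [Fintype V] [DecidableEq V]

/-- `f` indexes a path of length `L` inside `s`. -/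
def IsPathOn (G : SimpleGraph V) (s : Finset V) (L : ℕ) (f : ℕ → V) : Prop :=
  (∀ m, m < L → G.Adj (f m) (f (m + 1))) ∧
  (∀ a b, a ≤ L → b ≤ L → f a = f b → a = b) ∧
  (∀ m, m ≤ L → f m ∈ s)

variable {G : SimpleGraph V} {s : Finset V} {L k i j : ℕ} {f : ℕ → V}

lemma IsPathOn.mono {t : Finset V} (h : IsPathOn G s L f) (hst : s ⊆ t) :
    IsPathOn G t L f :=
  ⟨h.1, h.2.1, fun m hm => hst (h.2.2 m hm)⟩

lemma IsPathOn.of_le (h : IsPathOn G s L f) (hk : k ≤ L) : IsPathOn G s k f :=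
  ⟨fun m hm => h.1 m (hm.trans_le hk), fun a b ha hb => h.2.1 a b (ha.trans hk) (hb.trans hk),
    fun m hm => h.2.2 m (hm.trans hk)⟩

lemma IsPathOn.lt_card (h : IsPathOn G s L f) : L < s.card := by
  have hsub : (Finset.range (L + 1)).image f ⊆ s := by
    intro x hx
    simp only [mem_image, mem_range] at hx
    obtain ⟨m, hm, rfl⟩ := hx
    exact h.2.2 m (by omega)
  have hcard : ((Finset.range (L + 1)).image f).card = L + 1 := by
    rw [Finset.card_image_of_injOn, Finset.card_range]
    intro a ha b hb hab
    simp only [Finset.coe_range, Set.mem_Iio] at ha hb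
    exact h.2.1 a b (by omega) (by omega) hab
  have := Finset.card_le_card hsub
  omega


variable {G : SimpleGraph V} [DecidableRel G.Adj]

lemma IsPathOn.reverse (h : IsPathOn G s L f) : IsPathOn G s L (fun m => f (L - m)) := by
  refine ⟨fun m hm => ?_, fun a b ha hb hab => ?_, fun m hm => h.2.2 _ (by omega)⟩
  · have := h.1 (L - (m + 1)) (by omega)
    have e : L - (m + 1) + 1 = L - m := by omega
    rw [e] at this
    exact this.symm
  · have := h.2.1 _ _ (Nat.sub_le L a) (Nat.sub_le L b) hab
    omega

/-- rotation: from a path with crossing chords, a path with the same vertex set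
starting at `f j`, for `j ≤ i`. -/
lemma IsPathOn.rotate (h : IsPathOn G s L f) (hi : i < L)
    (hA : G.Adj (f 0) (f (i + 1))) (hB : G.Adj (f L) (f i)) (hj : j ≤ i) :
    ∃ g, IsPathOn G s L g ∧ g 0 = f j ∧ ∀ m ≤ L, ∃ t ≤ L, g m = f t := by
  set idx : ℕ → ℕ := fun m =>
    if m ≤ j then j - m else if m ≤ j + L - i then m - j + i else j + L + 1 - m with hidx
  have hle : ∀ m ≤ L, idx m ≤ L := by
    intro m hm
    simp only [hidx]
    split_ifs <;> omega
  have hinj : ∀ a ≤ L, ∀ b ≤ L, idx a = idx b → a = b := by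
    intro a ha b hb hab
    simp only [hidx] at hab
    split_ifs at hab <;> omega
  refine ⟨fun m => f (idx m), ⟨fun m hm => ?_, fun a b ha hb hab => ?_, fun m hm => h.2.2 _ (hle m hm)⟩, ?_, fun m hm => ⟨idx m, hle m hm, rfl⟩⟩
  · -- adjacency
    have hstep : ∀ a b : ℕ, b < L → a = b + 1 → G.Adj (f a) (f b) := by
      intro a b hb hab; subst hab; exact (h.1 b hb).symm
    have hstep' : ∀ a b : ℕ, a < L → b = a + 1 → G.Adj (f a) (f b) := by
      intro a b ha hab; subst hab; exact h.1 a ha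
    show G.Adj (f (idx m)) (f (idx (m + 1)))
    by_cases h1 : m + 1 ≤ j
    · have e1 : idx m = j - m := by simp only [hidx]; rw [if_pos (by omega)]
      have e2 : idx (m + 1) = j - (m + 1) := by simp only [hidx]; rw [if_pos h1]
      rw [e1, e2]; exact hstep _ _ (by omega) (by omega)
    · by_cases h2 : m ≤ j
      · -- m = j
        have e1 : idx m = 0 := by simp only [hidx]; rw [if_pos h2]; omega
        have e2 : idx (m + 1) = i + 1 := by
          simp only [hidx]; rw [if_neg h1, if_pos (by omega)]; omega
        rw [e1, e2]; exact hA
      · by_cases h3 : m + 1 ≤ j + L - i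
        · have e1 : idx m = m - j + i := by
            simp only [hidx]; rw [if_neg h2, if_pos (by omega)]
          have e2 : idx (m + 1) = m + 1 - j + i := by
            simp only [hidx]; rw [if_neg (by omega), if_pos h3]
          rw [e1, e2]; exact hstep' _ _ (by omega) (by omega)
        · by_cases h4 : m ≤ j + L - i
          · -- m = j + L - i, next is i
            have e1 : idx m = L := by
              simp only [hidx]; rw [if_neg h2, if_pos h4]; omega
            have e2 : idx (m + 1) = i := by
              simp only [hidx]; rw [if_neg (by omega), if_neg (by omega)]; omega
            rw [e1, e2]; exact hB
          · have e1 : idx m = j + L + 1 - m := by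
              simp only [hidx]; rw [if_neg h2, if_neg h4]
            have e2 : idx (m + 1) = j + L - m := by
              simp only [hidx]; rw [if_neg (by omega), if_neg (by omega)]; omega
            rw [e1, e2]; exact hstep _ _ (by omega) (by omega)
  · exact hinj a ha b hb (h.2.1 _ _ (hle a ha) (hle b hb) hab)
  · show f (idx 0) = f j
    have e : idx 0 = j := by simp [hidx]
    rw [e]

lemma IsPathOn.rotate_all (h : IsPathOn G s L f) (hi : i < L)
    (hA : G.Adj (f 0) (f (i + 1))) (hB : G.Adj (f L) (f i)) (hj : j ≤ L) :
    ∃ g, IsPathOn G s L g ∧ g 0 = f j ∧ ∀ m ≤ L, ∃ t ≤ L, g m = f t := by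
  rcases le_or_gt j i with hji | hji
  · exact h.rotate hi hA hB hji
  · have hrev := h.reverse
    have e1 : L - 0 = L := by omega
    have e2 : L - (L - 1 - i + 1) = i := by omega
    have e3 : L - (L - 1 - i) = i + 1 := by omega
    have e4 : L - L = 0 := by omega
    have hA' : G.Adj (f (L - 0)) (f (L - (L - 1 - i + 1))) := by rw [e1, e2]; exact hB
    have hB' : G.Adj (f (L - L)) (f (L - (L - 1 - i))) := by rw [e3, e4]; exact hA
    obtain ⟨g, hg, hg0, hgm⟩ := hrev.rotate (i := L - 1 - i) (j := L - j) (by omega) hA' hB'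
      (by omega)
    refine ⟨g, hg, ?_, fun m hm => ?_⟩
    · rw [hg0]; congr 1; omega
    · obtain ⟨t, ht, hgt⟩ := hgm m hm
      exact ⟨L - t, by omega, hgt⟩

/-- Extend a path at the front with a new vertex. -/
lemma IsPathOn.extend (h : IsPathOn G s L f) {w : V} (hw : w ∈ s)
    (hadj : G.Adj (f 0) w) (hnew : ∀ t ≤ L, f t ≠ w) :
    IsPathOn G s (L + 1) (fun m => if m = 0 then w else f (m - 1)) := by
  refine ⟨fun m hm => ?_, fun a b ha hb hab => ?_, fun m hm => ?_⟩
  · by_cases h0 : m = 0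
    · subst h0
      simp only [if_pos rfl, if_neg one_ne_zero]
      exact hadj.symm
    · simp only [if_neg h0, if_neg (Nat.succ_ne_zero m)]
      have e : m + 1 - 1 = m - 1 + 1 := by omega
      rw [e]
      exact h.1 (m - 1) (by omega)
  · simp only at hab
    by_cases ha0 : a = 0 <;> by_cases hb0 : b = 0
    · omega
    · rw [if_pos ha0, if_neg hb0] at hab
      exact absurd hab.symm (hnew (b - 1) (by omega))
    · rw [if_neg ha0, if_pos hb0] at hab
      exact absurd hab (hnew (a - 1) (by omega))
    · rw [if_neg ha0, if_neg hb0] at hab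
      have := h.2.1 (a - 1) (b - 1) (by omega) (by omega) hab
      omega
  · by_cases h0 : m = 0
    · simp only [if_pos h0]; exact hw
    · simp only [if_neg h0]; exact h.2.2 (m - 1) (by omega)

/-- The edges of `G` inside `s`. -/
def es (G : SimpleGraph V) [DecidableRel G.Adj] (s : Finset V) : Finset (Sym2 V) :=
  G.edgeFinset ∩ s.sym2

variable {G : SimpleGraph V} [DecidableRel G.Adj] {s t : Finset V} {v : V}

lemma exists_rep_of_mem_es {e : Sym2 V} (he : e ∈ es G s) :
    ∃ a b, e = s(a, b) ∧ G.Adj a b ∧ a ∈ s ∧ b ∈ s := by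
  simp only [es, mem_inter, mem_edgeFinset] at he
  induction e using Sym2.inductionOn with
  | hf a b =>
    refine ⟨a, b, rfl, he.1, ?_, ?_⟩
    · exact Finset.mem_sym2_iff.mp he.2 a (by simp)
    · exact Finset.mem_sym2_iff.mp he.2 b (by simp)

lemma mk_mem_es {a b : V} (h : G.Adj a b) (ha : a ∈ s) (hb : b ∈ s) :
    s(a, b) ∈ es G s := by
  simp only [es, mem_inter, mem_edgeFinset, mem_edgeSet]
  exact ⟨h, Finset.mk_mem_sym2_iff.mpr ⟨ha, hb⟩⟩

lemma es_mono (h : s ⊆ t) : es G s ⊆ es G t :=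
  Finset.inter_subset_inter le_rfl (Finset.sym2_mono h)

lemma twice_card_es_le : 2 * (es G s).card ≤ s.card * (s.card - 1) := by
  classical
  have hdisj : Disjoint (es G s) (s.image Sym2.diag) := by
    rw [Finset.disjoint_left]
    intro e he hd
    simp only [mem_image] at hd
    obtain ⟨a, _, rfl⟩ := hd
    have := G.not_isDiag_of_mem_edgeFinset (Finset.mem_inter.mp he).1
    exact this (Sym2.isDiag_iff_proj_eq.mpr rfl)
  have hsub : es G s ∪ s.image Sym2.diag ⊆ s.sym2 := by
    apply Finset.union_subset
    · exact Finset.inter_subset_right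
    · intro e he
      simp only [mem_image] at he
      obtain ⟨a, ha, rfl⟩ := he
      refine Finset.mem_sym2_iff.mpr ?_
      intro y hy
      rw [Sym2.diag, Sym2.mem_iff] at hy
      rcases hy with rfl | rfl <;> exact ha
  have hcard := Finset.card_le_card hsub
  rw [Finset.card_union_of_disjoint hdisj, Finset.card_sym2,
    Finset.card_image_of_injective _ Sym2.diag_injective] at hcard
  have hch : (s.card + 1).choose 2 * 2 = (s.card + 1) * s.card := by
    rw [Nat.choose_two_right]
    have h2 : 2 ∣ (s.card + 1) * ((s.card + 1) - 1) := (s.card + 1).even_mul_pred_self.two_dvd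
    simp only [Nat.add_sub_cancel] at h2 ⊢
    exact Nat.div_mul_cancel h2
  rcases hc : s.card with _ | d
  · rw [hc] at hcard
    simp only [Nat.choose] at hcard
    omega
  · rw [hc] at hcard hch
    simp only [Nat.add_sub_cancel]
    nlinarith [hcard, hch]

lemma card_es_erase_le (v : V) :
    (es G s).card ≤ (es G (s.erase v)).card + (G.neighborFinset v ∩ s).card := by
  classical
  have hsub : es G s ⊆ es G (s.erase v) ∪ (es G s \ es G (s.erase v)) := by
    intro e he
    by_cases h : e ∈ es G (s.erase v)
    · exact Finset.mem_union_left _ h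
    · exact Finset.mem_union_right _ (Finset.mem_sdiff.mpr ⟨he, h⟩)
  have hD : (es G s \ es G (s.erase v)).card ≤ (G.neighborFinset v ∩ s).card := by
    apply Finset.card_le_card_of_injOn (fun e => if h : v ∈ e then Sym2.Mem.other' h else v)
    · intro e he
      simp only [Finset.mem_coe] at he ⊢
      rw [Finset.mem_sdiff] at he
      obtain ⟨a, b, rfl, hadj, ha, hb⟩ := exists_rep_of_mem_es he.1
      have hv : v ∈ s(a, b) := by
        by_contra hv
        apply he.2
        apply mk_mem_es hadj <;> rw [Finset.mem_erase] <;>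
          exact ⟨fun h => hv (by rw [h]; simp [Sym2.mem_iff]), by assumption⟩
      rw [dif_pos hv]
      have hsp := Sym2.other_spec' hv
      have hmem := Sym2.other_mem' hv
      rw [Finset.mem_inter, mem_neighborFinset]
      constructor
      · have : s(v, Sym2.Mem.other' hv) ∈ G.edgeSet := by
          rw [hsp]; exact hadj
        exact this
      · rcases Sym2.mem_iff.mp hmem with h1 | h1 <;> rw [h1] <;> assumption
    · intro e1 he1 e2 he2 heq
      rw [Finset.mem_coe, Finset.mem_sdiff] at he1 he2
      have hv1 : v ∈ e1 := by
        obtain ⟨a, b, rfl, hadj, ha, hb⟩ := exists_rep_of_mem_es he1.1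
        by_contra hv
        exact he1.2 (mk_mem_es hadj (Finset.mem_erase.mpr ⟨fun h => hv (by rw [h]; simp), ha⟩)
          (Finset.mem_erase.mpr ⟨fun h => hv (by rw [h]; simp), hb⟩))
      have hv2 : v ∈ e2 := by
        obtain ⟨a, b, rfl, hadj, ha, hb⟩ := exists_rep_of_mem_es he2.1
        by_contra hv
        exact he2.2 (mk_mem_es hadj (Finset.mem_erase.mpr ⟨fun h => hv (by rw [h]; simp), ha⟩)
          (Finset.mem_erase.mpr ⟨fun h => hv (by rw [h]; simp), hb⟩))
      have heq' : Sym2.Mem.other' hv1 = Sym2.Mem.other' hv2 := by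
        simpa only [dif_pos hv1, dif_pos hv2] using heq
      rw [← Sym2.other_spec' hv1, ← Sym2.other_spec' hv2, heq']
  calc (es G s).card ≤ (es G (s.erase v) ∪ (es G s \ es G (s.erase v))).card :=
        Finset.card_le_card hsub
    _ ≤ (es G (s.erase v)).card + (es G s \ es G (s.erase v)).card := Finset.card_union_le _ _
    _ ≤ _ := by omega

lemma card_es_split {T : Finset V} (hT : T ⊆ s)
    (hcl : ∀ x ∈ T, ∀ w ∈ s, G.Adj x w → w ∈ T) :
    (es G s).card ≤ (es G T).card + (es G (s \ T)).card := by
  have hsub : es G s ⊆ es G T ∪ es G (s \ T) := by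
    intro e he
    obtain ⟨a, b, rfl, hadj, ha, hb⟩ := exists_rep_of_mem_es he
    by_cases haT : a ∈ T
    · exact Finset.mem_union_left _ (mk_mem_es hadj haT (hcl a haT b hb hadj))
    · by_cases hbT : b ∈ T
      · exact Finset.mem_union_left _ (mk_mem_es hadj (hcl b hbT a ha hadj.symm) hbT)
      · exact Finset.mem_union_right _ (mk_mem_es hadj (Finset.mem_sdiff.mpr ⟨ha, haT⟩)
          (Finset.mem_sdiff.mpr ⟨hb, hbT⟩))
  exact le_trans (Finset.card_le_card hsub) (Finset.card_union_le _ _)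

/-- The vertex set of a maximal path is closed under adjacency inside `s`. -/
lemma closed_of_max (hf : IsPathOn G s L f) (h1 : 1 ≤ L) (hLk : L + 1 ≤ k)
    (hmax : ∀ g : ℕ → V, ¬ IsPathOn G s (L + 1) g)
    (hb : ∀ v ∈ s, k ≤ 2 * (G.neighborFinset v ∩ s).card) :
    ∀ x ∈ (Finset.range (L + 1)).image f, ∀ w ∈ s, G.Adj x w →
      w ∈ (Finset.range (L + 1)).image f := by
  -- any graph-neighbor (inside s) of the starting point of a path covering the
  -- same vertices is one of the path's vertices
  have hclose : ∀ g : ℕ → V, IsPathOn G s L g → (∀ m ≤ L, ∃ t ≤ L, g m = f t) →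
      ∀ w ∈ s, G.Adj (g 0) w → ∃ t ≤ L, f t = w := by
    intro g hg hcov w hw hadj
    by_contra hno
    push_neg at hno
    have hnew : ∀ t ≤ L, g t ≠ w := by
      intro t ht
      obtain ⟨t', ht', hgt⟩ := hcov t ht
      rw [hgt]
      exact hno t' ht'
    exact hmax _ (hg.extend hw hadj hnew)
  have hend0 : ∀ w ∈ s, G.Adj (f 0) w → ∃ t ≤ L, f t = w :=
    hclose f hf (fun m hm => ⟨m, hm, rfl⟩)
  have hendL : ∀ w ∈ s, G.Adj (f L) w → ∃ t ≤ L, f t = w := by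
    have hcov : ∀ m ≤ L, ∃ t ≤ L, (fun m => f (L - m)) m = f t := by
      intro m hm; exact ⟨L - m, by omega, rfl⟩
    intro w hw hadj
    exact hclose _ hf.reverse hcov w hw hadj
  -- the two chord index sets
  set A := (Finset.range L).filter (fun i => G.Adj (f 0) (f (i + 1))) with hA
  set B := (Finset.range L).filter (fun i => G.Adj (f L) (f i)) with hB
  have hAcard : A.card = (G.neighborFinset (f 0) ∩ s).card := by
    have himg : A.image (fun i => f (i + 1)) = G.neighborFinset (f 0) ∩ s := by
      ext w
      simp only [hA, mem_image, mem_filter, mem_range, mem_inter, mem_neighborFinset]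
      constructor
      · rintro ⟨i, ⟨hi, hadj⟩, rfl⟩
        exact ⟨hadj, hf.2.2 (i + 1) (by omega)⟩
      · rintro ⟨hadj, hwin⟩
        obtain ⟨t, ht, hft⟩ := hend0 w hwin hadj
        have ht0 : t ≠ 0 := by
          rintro rfl
          rw [hft] at hadj
          exact G.irrefl hadj
        refine ⟨t - 1, ⟨by omega, ?_⟩, ?_⟩ <;>
          · have e : t - 1 + 1 = t := by omega
            rw [e]
            first | rwa [hft] | exact hft
    rw [← himg, Finset.card_image_of_injOn]
    intro a ha b hb hab
    simp only [hA, Finset.coe_filter, Set.mem_setOf_eq, mem_range] at ha hb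
    have := hf.2.1 (a + 1) (b + 1) (by omega) (by omega) hab
    omega
  have hBcard : B.card = (G.neighborFinset (f L) ∩ s).card := by
    have himg : B.image f = G.neighborFinset (f L) ∩ s := by
      ext w
      simp only [hB, mem_image, mem_filter, mem_range, mem_inter, mem_neighborFinset]
      constructor
      · rintro ⟨i, ⟨hi, hadj⟩, rfl⟩
        exact ⟨hadj, hf.2.2 i (by omega)⟩
      · rintro ⟨hadj, hwin⟩
        obtain ⟨t, ht, hft⟩ := hendL w hwin hadj
        have htL : t ≠ L := by
          rintro rfl
          rw [hft] at hadj
          exact G.irrefl hadj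
        exact ⟨t, ⟨by omega, by rwa [hft]⟩, hft⟩
    rw [← himg, Finset.card_image_of_injOn]
    intro a ha b hb hab
    simp only [hB, Finset.coe_filter, Set.mem_setOf_eq, mem_range] at ha hb
    exact hf.2.1 a b (by omega) (by omega) hab
  -- a common chord index exists
  have hABsub : A ∪ B ⊆ Finset.range L := by
    apply Finset.union_subset <;> exact Finset.filter_subset _ _
  have hd0 := hb (f 0) (hf.2.2 0 (by omega))
  have hdL := hb (f L) (hf.2.2 L le_rfl)
  have hsum : L < A.card + B.card := by
    have h2 : 2 * (A.card + B.card) ≥ 2 * k := by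
      rw [hAcard, hBcard]; omega
    omega
  have hinter : (A ∩ B).Nonempty := by
    rw [← Finset.card_pos]
    have := Finset.card_union_add_card_inter A B
    have := Finset.card_le_card hABsub
    rw [Finset.card_range] at this
    omega
  obtain ⟨i, hi⟩ := hinter
  rw [Finset.mem_inter, hA, hB, Finset.mem_filter, Finset.mem_filter, Finset.mem_range] at hi
  obtain ⟨⟨hiL, hchA⟩, _, hchB⟩ := hi
  -- now conclude
  intro x hx w hw hadj
  simp only [mem_image, mem_range] at hx
  obtain ⟨j, hj, rfl⟩ := hx
  obtain ⟨g, hg, hg0, hgcov⟩ := hf.rotate_all hiL hchA hchB (by omega : j ≤ L)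
  obtain ⟨t, ht, hft⟩ := hclose g hg hgcov w hw (by rwa [hg0])
  simp only [mem_image, mem_range]
  exact ⟨t, by omega, hft⟩

lemma key (k : ℕ) (hk : 2 ≤ k) :
    ∀ N (s : Finset V), s.card ≤ N → (k - 1) * s.card < 2 * (es G s).card →
    ∃ f, IsPathOn G s k f := by
  intro N
  induction N with
  | zero =>
    intro s hsN hE
    have h0 : s.card = 0 := by omega
    have := twice_card_es_le (G := G) (s := s)
    rw [h0] at this hE
    omega
  | succ N ih =>
    intro s hsN hE
    by_cases hsmall : ∃ v ∈ s, 2 * (G.neighborFinset v ∩ s).card < k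
    · obtain ⟨v, hv, hdv⟩ := hsmall
      have hc1 : 1 ≤ s.card := Finset.card_pos.mpr ⟨v, hv⟩
      have herase := card_es_erase_le (G := G) (s := s) v
      have hcard' : (s.erase v).card = s.card - 1 := Finset.card_erase_of_mem hv
      have hE' : (k - 1) * (s.erase v).card < 2 * (es G (s.erase v)).card := by
        have hmul : (k - 1) * s.card = (k - 1) * (s.card - 1) + (k - 1) := by
          have e : s.card - 1 + 1 = s.card := by omega
          conv_lhs => rw [← e]
          ring
        have hdk : 2 * (G.neighborFinset v ∩ s).card ≤ k - 1 := by omega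
        rw [hcard']
        linarith [hE, herase, hmul, hdk]
      obtain ⟨f, hf⟩ := ih (s.erase v) (by omega) hE'
      exact ⟨f, hf.mono (Finset.erase_subset v s)⟩
    · push_neg at hsmall
      have hEpos : 0 < (es G s).card := by
        rcases Nat.eq_zero_or_pos (es G s).card with h | h
        · rw [h] at hE; omega
        · exact h
      obtain ⟨e, he⟩ := Finset.card_pos.mp hEpos
      obtain ⟨a, b, rfl, hadj, has, hbs⟩ := exists_rep_of_mem_es he
      classical
      set Q : ℕ → Prop := fun ℓ => ∃ f, IsPathOn G s ℓ f with hQdef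
      have hQ1 : Q 1 := by
        refine ⟨fun m => if m = 0 then a else b, ?_, ?_, ?_⟩
        · intro m hm
          have : m = 0 := by omega
          subst this
          simp only [if_pos rfl, if_neg one_ne_zero]
          exact hadj
        · intro x y hx hy hxy
          by_cases x0 : x = 0 <;> by_cases y0 : y = 0 <;>
            simp only [x0, y0, if_pos, if_neg, ite_true, ite_false] at hxy <;>
            first | omega | (exact absurd hxy hadj.ne) | (exact absurd hxy.symm hadj.ne)
        · intro m hm
          by_cases m0 : m = 0 <;> simp only [m0, ite_true, ite_false] <;> assumption
      have hQbound : ∀ ℓ, Q ℓ → ℓ < s.card := fun ℓ ⟨f, hf⟩ => hf.lt_card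
      set L := Nat.findGreatest Q s.card with hL
      have hL1 : 1 ≤ L := Nat.le_findGreatest (by have := hQbound 1 hQ1; omega) hQ1
      have hQL : Q L := Nat.findGreatest_spec (by have := hQbound 1 hQ1; omega) hQ1
      obtain ⟨f, hf⟩ := hQL
      have hmax : ∀ g : ℕ → V, ¬ IsPathOn G s (L + 1) g := by
        intro g hg
        have hQ' : Q (L + 1) := ⟨g, hg⟩
        have hlt := hQbound _ hQ'
        exact Nat.findGreatest_is_greatest (n := s.card) (P := Q) (by omega) (by omega) hQ'
      by_cases hkL : k ≤ L
      · exact ⟨f, hf.of_le hkL⟩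
      · have hLk : L + 1 ≤ k := by omega
        set T := (Finset.range (L + 1)).image f with hT
        have hTs : T ⊆ s := by
          intro x hx
          simp only [hT, mem_image, mem_range] at hx
          obtain ⟨m, hm, rfl⟩ := hx
          exact hf.2.2 m (by omega)
        have hTcard : T.card = L + 1 := by
          rw [hT, Finset.card_image_of_injOn, Finset.card_range]
          intro x hx y hy hxy
          simp only [Finset.coe_range, Set.mem_Iio] at hx hy
          exact hf.2.1 x y (by omega) (by omega) hxy
        have hcl := closed_of_max hf hL1 hLk hmax hsmall
        have hsplit := card_es_split hTs hcl
        have hbound := twice_card_es_le (G := G) (s := T)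
        have hE' : (k - 1) * (s \ T).card < 2 * (es G (s \ T)).card := by
          have hsc : s.card = (L + 1) + (s \ T).card := by
            have h1 := Finset.card_le_card hTs
            have h2 := Finset.card_sdiff_of_subset hTs
            rw [hTcard] at h1 h2
            omega
          have hmul : (k - 1) * s.card = (k - 1) * (L + 1) + (k - 1) * (s \ T).card := by
            rw [hsc, mul_add]
          have h2 : 2 * (es G T).card ≤ (L + 1) * (k - 1) := by
            rw [hTcard] at hbound
            simp only [Nat.add_sub_cancel] at hbound
            calc 2 * (es G T).card ≤ (L + 1) * L := hbound
              _ ≤ (L + 1) * (k - 1) := Nat.mul_le_mul_left _ (by omega)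
          linarith [hE, hsplit, hmul, h2, mul_comm (k - 1) (L + 1)]
        have hcard' : (s \ T).card ≤ N := by
          have h1 := Finset.card_le_card hTs
          have h2 := Finset.card_sdiff_of_subset hTs
          rw [hTcard] at h1 h2
          omega
        obtain ⟨f', hf'⟩ := ih (s \ T) hcard' hE'
        exact ⟨f', hf'.mono Finset.sdiff_subset⟩


end EGP

theorem erdos_gallai_path {V : Type*} [Fintype V] [DecidableEq V]
    (G : SimpleGraph V) [DecidableRel G.Adj] (n k : ℕ)
    (hn : Fintype.card V = n) (hk : 2 ≤ k)
    (he : ((k : ℚ) - 1) / 2 * n < G.edgeFinset.card) :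
    ∃ f : Fin (k + 1) ↪ V, ∀ u v, (pathGraph (k + 1)).Adj u v → G.Adj (f u) (f v) := by
  have hnat : (k - 1) * Fintype.card V < 2 * G.edgeFinset.card := by
    have h2 : ((k : ℚ) - 1) * n < 2 * G.edgeFinset.card := by linarith [he]
    have hcast : ((k - 1 : ℕ) : ℚ) = (k : ℚ) - 1 := by
      rw [Nat.cast_sub (by omega : 1 ≤ k)]
      norm_num
    rw [← hcast] at h2
    rw [hn]
    exact_mod_cast h2
  have hes : EGP.es G (Finset.univ : Finset V) = G.edgeFinset := by
    apply Finset.inter_eq_left.mpr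
    intro e _
    exact Finset.mem_sym2_iff.mpr fun a _ => Finset.mem_univ a
  obtain ⟨f, hf⟩ := EGP.key (G := G) k hk (Fintype.card V) Finset.univ
    (by rw [Finset.card_univ]) (by rw [Finset.card_univ, hes]; exact hnat)
  refine ⟨⟨fun m => f m.val, ?_⟩, ?_⟩
  · intro x y hxy
    have hx := x.isLt
    have hy := y.isLt
    exact Fin.ext (hf.2.1 x.val y.val (by omega) (by omega) hxy)
  · intro u v huv
    rw [pathGraph_adj] at huv
    rcases huv with h | h
    · have hu : u.val < k := by have := v.isLt; omega
      have hadj := hf.1 u.val hu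
      rwa [h] at hadj
    · have hv : v.val < k := by have := u.isLt; omega
      have hadj := (hf.1 v.val hv).symm
      rwa [h] at hadj
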